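/- arXiv:1603.03301 — 3 statements merged into one kernel-verified Lean document; each statement's English description precedes it below -/
import Mathlib

section
/- The van der Waerden number W(3,2) equals 9: every 2-coloring of {0,...,8} has a monochromatic 3-term arithmetic progression, and there exists a 2-coloring of {0,...,7} with no monochromatic 3-term arithmetic progression. -/
set_option maxRecDepth 10000


/-- `monoAP χ k` : the coloring `χ` of `{0,…,n-1}` contains a monochromatic
arithmetic progression of length `k` with positive common difference. -/
def monoAP {n : ℕ} {α : Type*} (χ : Fin n → α) (k : ℕ) : Prop :=
  ∃ a d : ℕ, 0 < d ∧ ∃ h : a + (k - 1) * d < n,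
    ∀ i : ℕ, ∀ hi : i < k,
      χ ⟨a + i * d, by
        have hle : i * d ≤ (k - 1) * d := Nat.mul_le_mul_right d (by omega)
        omega⟩ = χ ⟨a, by omega⟩

/-- `hasVdW N k r` : every `r`-coloring of `{0,…,N-1}` contains a monochromatic
arithmetic progression of length `k`. -/
def hasVdW (N k r : ℕ) : Prop := ∀ χ : Fin N → Fin r, monoAP χ k

/-- The van der Waerden number `W(k,r)`: the least `N` such that every
`r`-coloring of `{0,…,N-1}` contains a monochromatic length-`k` AP. -/
noncomputable def W (k r : ℕ) : ℕ := sInf {N | hasVdW N k r}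

/-- Decidable reformulation of `monoAP χ 3`. -/
def mono3 {n : ℕ} {α : Type*} (χ : Fin n → α) : Prop :=
  ∃ a d : Fin n, 0 < (d : ℕ) ∧ ∃ h : (a : ℕ) + 2 * (d : ℕ) < n,
    χ ⟨(a : ℕ) + (d : ℕ), by omega⟩ = χ a ∧ χ ⟨(a : ℕ) + 2 * (d : ℕ), h⟩ = χ a

instance {n : ℕ} {α : Type*} [DecidableEq α] (χ : Fin n → α) : Decidable (mono3 χ) := by
  unfold mono3; infer_instance

theorem mono3_iff {n : ℕ} {α : Type*} (χ : Fin n → α) : monoAP χ 3 ↔ mono3 χ := by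
  constructor
  · rintro ⟨a, d, hd, h, hall⟩
    have h' : a + 2 * d < n := h
    refine ⟨⟨a, by omega⟩, ⟨d, by omega⟩, hd, by simpa using h', ?_, ?_⟩
    · have := hall 1 (by omega)
      simpa using this
    · have := hall 2 (by omega)
      simpa using this
  · rintro ⟨a, d, hd, h, h1, h2⟩
    refine ⟨a, d, hd, by simpa using h, ?_⟩
    intro i hi
    interval_cases i
    · simp
    · simpa using h1
    · simpa using h2

theorem vdW_three_two_eq_nine :
    W 3 2 = 9 ∧ (∀ χ : Fin 9 → Fin 2, monoAP χ 3) ∧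
      (∃ χ : Fin 8 → Fin 2, ¬ monoAP χ 3) := by
  have h9 : ∀ χ : Fin 9 → Fin 2, monoAP χ 3 := by
    intro χ
    rw [mono3_iff]
    revert χ
    decide
  have hχ8 : ¬ monoAP (![0, 0, 1, 1, 0, 0, 1, 1] : Fin 8 → Fin 2) 3 := by
    rw [mono3_iff]
    decide
  have hmem : 9 ∈ {N | hasVdW N 3 2} := h9
  refine ⟨le_antisymm (Nat.sInf_le hmem) (le_csInf ⟨9, hmem⟩ ?_), h9, _, hχ8⟩
  intro N hN
  by_contra hlt
  push_neg at hlt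
  have hN8 : N ≤ 8 := by omega
  set χ8 : Fin 8 → Fin 2 := ![0, 0, 1, 1, 0, 0, 1, 1]
  have := hN (fun i => χ8 ⟨i, lt_of_lt_of_le i.2 hN8⟩)
  obtain ⟨a, d, hd, h, hall⟩ := this
  have h' : a + 2 * d < N := h
  exact hχ8 ⟨a, d, hd, by omega, fun i hi => hall i hi⟩
end

section
/- There exists a 2-coloring of {0,...,33} with no monochromatic arithmetic progression of length 4; hence W(4,2) > 34. Explicitly, color position n (for n not divisible by 11) by the parity of the discrete logarithm of n mod 11 base 2, and color positions 0, 11, 22, 33 with colors that are not all equal (e.g., B, B, B, G). -/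
/-- The coloring of `{0,…,33}` from Rabung's construction with `p = 11`:
off multiples of 11, color by the parity of the discrete log base 2 of the
residue mod 11 (blue `0` at residues 1,3,4,5,9); the multiples 0, 11, 22 get
blue and 33 gets green, so they are not all equal. -/
def rabungW42 : Fin 34 → Fin 2 := fun n =>
  if 11 ∣ n.val then (if n.val = 33 then 1 else 0)
  else if n.val % 11 = 1 ∨ n.val % 11 = 3 ∨ n.val % 11 = 4 ∨ n.val % 11 = 5 ∨ n.val % 11 = 9
    then 0 else 1

lemma rab_check : ∀ (a : Fin 34) (d : Fin 12), 0 < d.val → a.val + 3 * d.val < 34 →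
    ¬ (rabungW42 ⟨(a.val + d.val) % 34, Nat.mod_lt _ (by norm_num)⟩ = rabungW42 a ∧
       rabungW42 ⟨(a.val + 2 * d.val) % 34, Nat.mod_lt _ (by norm_num)⟩ = rabungW42 a ∧
       rabungW42 ⟨(a.val + 3 * d.val) % 34, Nat.mod_lt _ (by norm_num)⟩ = rabungW42 a) := by
  decide

lemma not_mono : ¬ monoAP rabungW42 4 := by
  rintro ⟨a, d, hd, h, hall⟩
  have h' : a + 3 * d < 34 := by simpa using h
  have e1 := hall 1 (by norm_num)
  have e2 := hall 2 (by norm_num)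
  have e3 := hall 3 (by norm_num)
  have ha : a < 34 := by omega
  have hdlt : d < 12 := by omega
  refine rab_check ⟨a, ha⟩ ⟨d, hdlt⟩ hd h' ⟨?_, ?_, ?_⟩
  · convert e1 using 3; · simp only [Fin.val_mk]; omega
  · convert e2 using 3; · simp only [Fin.val_mk]; omega
  · convert e3 using 3; · simp only [Fin.val_mk]; omega

open Combinatorics in
lemma exists_vdW : ∃ N, hasVdW N 4 2 := by
  obtain ⟨ι, hι, hHJ⟩ := Line.exists_mono_in_high_dimension (Fin 4) (Fin 2)
  refine ⟨3 * Fintype.card ι + 1, fun χ => ?_⟩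
  have hsum : ∀ v : ι → Fin 4, (∑ i, (v i).val) < 3 * Fintype.card ι + 1 := by
    intro v
    have : (∑ i, (v i).val) ≤ ∑ _i : ι, 3 :=
      Finset.sum_le_sum (fun i _ => by omega)
    simp only [Finset.sum_const, Finset.card_univ, smul_eq_mul] at this
    omega
  obtain ⟨l, c, hc⟩ := hHJ (fun v => χ ⟨∑ i, (v i).val, hsum v⟩)
  classical
  set S : Finset ι := Finset.univ.filter (fun i => l.idxFun i = none) with hS
  have hdpos : 0 < S.card := by
    obtain ⟨i, hi⟩ := l.proper
    exact Finset.card_pos.2 ⟨i, by simp [hS, hi]⟩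
  set a : ℕ := ∑ i ∈ Sᶜ, ((l.idxFun i).getD 0).val with hA
  have split : ∀ x : Fin 4, (∑ i, ((l x) i).val) = a + x.val * S.card := by
    intro x
    rw [← Finset.sum_add_sum_compl S (fun i => ((l x) i).val)]
    have h1 : ∑ i ∈ S, ((l x) i).val = x.val * S.card := by
      rw [Finset.sum_congr rfl (fun i hi => ?_), Finset.sum_const, smul_eq_mul, mul_comm]
      have : l.idxFun i = none := by simpa [hS] using hi
      simp [Line.coe_apply, this]
    have h2 : ∑ i ∈ Sᶜ, ((l x) i).val = a := by
      rw [hA]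
      refine Finset.sum_congr rfl (fun i hi => ?_)
      have : l.idxFun i ≠ none := by simpa [hS] using hi
      obtain ⟨y, hy⟩ := Option.ne_none_iff_exists'.1 this
      simp [Line.coe_apply, hy]
    rw [h1, h2, add_comm]
  have hbound : a + 3 * S.card < 3 * Fintype.card ι + 1 := by
    have := hsum (l 3)
    rw [split 3] at this
    simpa [mul_comm] using this
  refine ⟨a, S.card, hdpos, by simpa using hbound, fun i hi => ?_⟩
  have key : ∀ x : Fin 4, χ ⟨a + x.val * S.card, by
      have := hsum (l x); rw [split x] at this
      have : x.val * S.card ≤ 3 * S.card := Nat.mul_le_mul_right _ (by omega)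
      omega⟩ = c := by
    intro x
    have := hc x
    convert this using 2
    exact Fin.ext (split x).symm
  have k1 := key ⟨i, hi⟩
  have k0 := key 0
  simp only [Fin.val_zero, zero_mul, add_zero] at k0
  exact k1.trans k0.symm

lemma hasVdW_mono {N M k r : ℕ} (h : hasVdW N k r) (hNM : N ≤ M) : hasVdW M k r := by
  intro χ
  obtain ⟨a, d, hd, hlt, hall⟩ := h (fun n => χ ⟨n.val, lt_of_lt_of_le n.isLt hNM⟩)
  exact ⟨a, d, hd, by omega, fun i hi => hall i hi⟩

theorem vdW_four_two_gt_34 : ¬ monoAP rabungW42 4 ∧ 34 < W 4 2 := by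
  refine ⟨not_mono, ?_⟩
  obtain ⟨N, hN⟩ := exists_vdW
  by_contra hle
  push_neg at hle
  have hmem : W 4 2 ∈ {N | hasVdW N 4 2} := Nat.sInf_mem ⟨N, hN⟩
  exact not_mono (hasVdW_mono hmem hle rabungW42)
end

section
/- Lower bound via the ring (cyclic) construction: if χ : ZMod n → Fin s has no monochromatic k-term arithmetic progression taken modulo n (with common difference a unit of ZMod n would suffice: assume no monochromatic progression a, a+c, ..., a+(k-1)c in ZMod n with c ≠ 0), and ψ : Fin m → Fin t has no monochromatic k-term arithmetic progression in {0,...,m-1}, then the coloring φ : Fin (n·m) → Fin s × Fin t defined by φ(i) = (χ(i mod n), ψ(i / n))—where i mod n is taken in ZMod n—has no monochromatic k-term arithmetic progression in {0,...,nm-1}, provided every prime divisor of n exceeds k. -/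
theorem ring_product_construction (k n m s t : ℕ)
    (hprime : ∀ q : ℕ, q.Prime → q ∣ n → k < q)
    (χ : ZMod n → Fin s)
    (hχ : ¬ ∃ a c : ZMod n, c ≠ 0 ∧
        ∀ i : ℕ, i < k → χ (a + (i : ZMod n) * c) = χ a)
    (ψ : Fin m → Fin t) (hψ : ¬ monoAP ψ k) :
    ¬ monoAP (fun i : Fin (n * m) =>
        ((χ ((i.val : ZMod n)),
          ψ ⟨i.val / n, by
            have hi := i.isLt
            rcases Nat.eq_zero_or_pos n with h | h
            · subst h; simp at hi
            · exact (Nat.div_lt_iff_lt_mul h).mpr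
                (Nat.lt_of_lt_of_eq hi (Nat.mul_comm n m))⟩) : Fin s × Fin t)) k := by
  rintro ⟨a, d, hd, hlt, hmono⟩
  by_cases hdvd : n ∣ d
  · obtain ⟨e, rfl⟩ := hdvd
    have hn : 0 < n := Nat.pos_of_ne_zero fun h => by simp [h] at hd
    have he : 0 < e := Nat.pos_of_ne_zero fun h => by simp [h] at hd
    have key : ∀ i : ℕ, (a + i * (n * e)) / n = a / n + i * e := fun i => by
      rw [show a + i * (n * e) = a + i * e * n by ring, Nat.add_mul_div_right _ _ hn]
    apply hψ
    refine ⟨a / n, e, he, ?_, ?_⟩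
    · have h1 : a / n + (k - 1) * e = (a + (k - 1) * (n * e)) / n := (key _).symm
      rw [h1, Nat.div_lt_iff_lt_mul hn]
      calc a + (k - 1) * (n * e) < n * m := hlt
        _ = m * n := Nat.mul_comm _ _
    · intro i hi
      have h2 := congrArg Prod.snd (hmono i hi)
      simp only at h2
      convert h2 using 2
      exact Fin.ext (key i).symm
  · apply hχ
    refine ⟨(a : ZMod n), (d : ZMod n), ?_, ?_⟩
    · intro h0
      exact hdvd ((CharP.cast_eq_zero_iff (ZMod n) n d).mp h0)
    · intro i hi
      have h1 := congrArg Prod.fst (hmono i hi)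
      simp only at h1
      push_cast at h1
      exact h1
end
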